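/- arXiv:2206.06257 — 4 statements merged into one kernel-verified Lean document; each statement's English description precedes it below -/
import Mathlib

section
/- Let E be a real inner product space, C ⊆ E a convex set, μ > 0, and f : E → ℝ a differentiable function that is μ-strongly concave on C. Let ε ≥ 0 and let δ*, δ ∈ C be such that δ* satisfies the exact first-order maximality condition ⟨δ' − δ*, ∇f(δ*)⟩ ≤ 0 for all δ' ∈ C, and δ satisfies the ε-approximate first-order condition ⟨δ' − δ, ∇f(δ)⟩ ≤ ε for all δ' ∈ C. Then μ‖δ − δ*‖² ≤ ε. -/
/-- If `f` is differentiable and `μ`-strongly concave on a convex set `C`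
(in the sense that `⟪∇f x − ∇f y, x − y⟫ ≤ −μ‖x − y‖²` on `C`), `δstar ∈ C` satisfies the
exact first-order maximality condition and `δ ∈ C` satisfies the `ε`-approximate first-order
condition, then `μ‖δ − δstar‖² ≤ ε`. -/
theorem approx_maximizer_close {E : Type*} [NormedAddCommGroup E] [InnerProductSpace ℝ E]
    [CompleteSpace E]
    (C : Set E) (hC : Convex ℝ C) (μ : ℝ) (hμ : 0 < μ)
    (f : E → ℝ) (f' : E → E) (hf : ∀ x, HasGradientAt f (f' x) x)
    (hconc : ∀ x ∈ C, ∀ y ∈ C,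
      (inner ℝ (f' x - f' y) (x - y) : ℝ) ≤ -μ * ‖x - y‖ ^ 2)
    (ε : ℝ) (hε : 0 ≤ ε) (δstar δ : E) (hδstar : δstar ∈ C) (hδ : δ ∈ C)
    (hopt : ∀ δ' ∈ C, (inner ℝ (δ' - δstar) (f' δstar) : ℝ) ≤ 0)
    (happrox : ∀ δ' ∈ C, (inner ℝ (δ' - δ) (f' δ) : ℝ) ≤ ε) :
    μ * ‖δ - δstar‖ ^ 2 ≤ ε := by
  have h1 := hconc δ hδ δstar hδstar
  have h2 := hopt δ hδ
  have h3 := happrox δstar hδstar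
  have e1 : (inner ℝ (f' δ - f' δstar) (δ - δstar) : ℝ)
      = (inner ℝ (δ - δstar) (f' δ) : ℝ) - (inner ℝ (δ - δstar) (f' δstar) : ℝ) := by
    rw [real_inner_comm]; simp [inner_sub_right]
  have e2 : (inner ℝ (δstar - δ) (f' δ) : ℝ) = -(inner ℝ (δ - δstar) (f' δ) : ℝ) := by
    rw [← neg_sub, inner_neg_left]
  nlinarith [h1, h2, h3, e1, e2]
end

section
/- Let E and F be real inner product spaces, C ⊆ E a convex set, μ > 0, L > 0, ε ≥ 0, and f : E → ℝ a differentiable function that is μ-strongly concave on C. Let G : E → F satisfy ‖G(x) − G(y)‖ ≤ L‖x − y‖ for all x, y ∈ C. Suppose δ* ∈ C satisfies ⟨δ' − δ*, ∇f(δ*)⟩ ≤ 0 for all δ' ∈ C, and δ ∈ C satisfies the (μ·ε/L²)-approximate first-order condition ⟨δ' − δ, ∇f(δ)⟩ ≤ μ·ε/L² for all δ' ∈ C. Then ‖G(δ) − G(δ*)‖² ≤ ε. -/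
/-- Lemma A1 of the paper. If `f` is differentiable and `μ`-strongly concave
on a convex set `C`, `G` is `L`-Lipschitz on `C`, `δstar ∈ C` is an exact first-order maximizer
and `δ ∈ C` satisfies the `(μ·ε/L²)`-approximate first-order condition, then
`‖G δ − G δstar‖² ≤ ε`. -/
theorem gradient_error_of_approx_maximizer {E F : Type*}
    [NormedAddCommGroup E] [InnerProductSpace ℝ E] [CompleteSpace E]
    [NormedAddCommGroup F] [InnerProductSpace ℝ F]
    (C : Set E) (hC : Convex ℝ C) (μ L ε : ℝ) (hμ : 0 < μ) (hL : 0 < L) (hε : 0 ≤ ε)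
    (f : E → ℝ) (f' : E → E) (hf : ∀ x, HasGradientAt f (f' x) x)
    (hconc : ∀ x ∈ C, ∀ y ∈ C,
      (inner ℝ (f' x - f' y) (x - y) : ℝ) ≤ -μ * ‖x - y‖ ^ 2)
    (G : E → F) (hGlip : ∀ x ∈ C, ∀ y ∈ C, ‖G x - G y‖ ≤ L * ‖x - y‖)
    (δstar δ : E) (hδstar : δstar ∈ C) (hδ : δ ∈ C)
    (hopt : ∀ δ' ∈ C, (inner ℝ (δ' - δstar) (f' δstar) : ℝ) ≤ 0)
    (happrox : ∀ δ' ∈ C, (inner ℝ (δ' - δ) (f' δ) : ℝ) ≤ μ * ε / L ^ 2) :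
    ‖G δ - G δstar‖ ^ 2 ≤ ε := by
  have ha := hopt δ hδ
  have hb := happrox δstar hδstar
  have hc := hconc δ hδ δstar hδstar
  have hrw : (inner ℝ (f' δ - f' δstar) (δ - δstar) : ℝ)
      = - (inner ℝ (δ - δstar) (f' δstar) : ℝ) - (inner ℝ (δstar - δ) (f' δ) : ℝ) := by
    rw [real_inner_comm]
    simp [inner_sub_left, inner_sub_right]
    ring
  have hdist : μ * ‖δ - δstar‖ ^ 2 ≤ μ * ε / L ^ 2 := by
    nlinarith [hc, hrw, ha, hb]
  have hdist2 : ‖δ - δstar‖ ^ 2 ≤ ε / L ^ 2 := by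
    rw [mul_div_assoc] at hdist
    exact (mul_le_mul_iff_right₀ hμ).mp hdist
  have hG := hGlip δ hδ δstar hδstar
  have hGnn : (0:ℝ) ≤ ‖G δ - G δstar‖ := norm_nonneg _
  have hL2 : (0:ℝ) < L ^ 2 := by positivity
  have : ‖G δ - G δstar‖ ^ 2 ≤ L ^ 2 * ‖δ - δstar‖ ^ 2 := by
    nlinarith [norm_nonneg (δ - δstar)]
  calc ‖G δ - G δstar‖ ^ 2 ≤ L ^ 2 * ‖δ - δstar‖ ^ 2 := this
    _ ≤ L ^ 2 * (ε / L ^ 2) := by nlinarith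
    _ = ε := by field_simp
end

section
/- Let 0 ≤ β₂ < 1, G > 0, d a positive integer, and g, v ∈ ℝᵈ with (1 − β₂)·g_j² ≤ v_j ≤ G² for every coordinate j. Define u ∈ ℝᵈ by u_j = g_j/√(v_j) when v_j > 0 and u_j = 0 otherwise, and assume u ≠ 0. Then for every a ∈ ℝᵈ and every index j with a_j·g_j ≥ 0, a_j·u_j/‖u‖₂ ≥ √((1 − β₂)/(G²·d)) · a_j·g_j. -/
/-- inequality (a) of (eq.t1bd) in the paper. Let `0 ≤ β₂ < 1`, `G > 0`,
and `g, v ∈ ℝᵈ` with `(1 − β₂)g_j² ≤ v_j ≤ G²` componentwise. Define `u_j = g_j/√v_j` when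
`v_j > 0` and `u_j = 0` otherwise, and assume `u ≠ 0`. Then for every `a ∈ ℝᵈ` and every
index `j` with `a_j·g_j ≥ 0`, `a_j·u_j/‖u‖₂ ≥ √((1 − β₂)/(G²·d)) · a_j·g_j`. -/
theorem lamb_descent_coordinate (β₂ G : ℝ) (hβ₂ : 0 ≤ β₂) (hβ₂' : β₂ < 1) (hG : 0 < G)
    (d : ℕ) (hd : 0 < d) (g v : EuclideanSpace ℝ (Fin d))
    (hvlow : ∀ j, (1 - β₂) * (g j) ^ 2 ≤ v j) (hvhigh : ∀ j, v j ≤ G ^ 2)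
    (u : EuclideanSpace ℝ (Fin d))
    (hu : ∀ j, u j = if 0 < v j then g j / Real.sqrt (v j) else 0)
    (hune : u ≠ 0)
    (a : EuclideanSpace ℝ (Fin d)) (j : Fin d) (hag : 0 ≤ a j * g j) :
    Real.sqrt ((1 - β₂) / (G ^ 2 * d)) * (a j * g j) ≤ a j * u j / ‖u‖ := by
  have h1 : (0:ℝ) < 1 - β₂ := by linarith
  have hdpos : (0:ℝ) < d := by exact_mod_cast hd
  have hupos : 0 < ‖u‖ := norm_pos_iff.mpr hune
  -- bound on ‖u‖
  have hsq : ∀ i, ‖u i‖ ^ 2 ≤ 1 / (1 - β₂) := by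
    intro i
    rw [hu i]
    by_cases hvi : 0 < v i
    · simp only [hvi, if_pos]
      rw [Real.norm_eq_abs, sq_abs, div_pow, Real.sq_sqrt hvi.le]
      rw [div_le_div_iff₀ hvi h1]
      nlinarith [hvlow i]
    · rw [if_neg hvi, norm_zero]
      norm_num
      exact hβ₂'.le
  have hnorm : ‖u‖ ≤ Real.sqrt (d / (1 - β₂)) := by
    rw [EuclideanSpace.norm_eq]
    apply Real.sqrt_le_sqrt
    calc ∑ i, ‖u i‖ ^ 2 ≤ ∑ _i : Fin d, 1 / (1 - β₂) :=
          Finset.sum_le_sum fun i _ => hsq i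
      _ = d / (1 - β₂) := by
          rw [Finset.sum_const, Finset.card_univ, Fintype.card_fin, nsmul_eq_mul]
          field_simp
  by_cases hvj : 0 < v j
  · have hsv : Real.sqrt (v j) ≤ G := by
      rw [show G = Real.sqrt (G ^ 2) by rw [Real.sqrt_sq hG.le]]
      exact Real.sqrt_le_sqrt (hvhigh j)
    have hsvpos : 0 < Real.sqrt (v j) := Real.sqrt_pos.mpr hvj
    have huj : u j = g j / Real.sqrt (v j) := by rw [hu j]; simp [hvj]
    -- key: √((1-β₂)/(G²d)) * √(v j) * ‖u‖ ≤ 1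
    have hkey : Real.sqrt ((1 - β₂) / (G ^ 2 * d)) * Real.sqrt (v j) * ‖u‖ ≤ 1 := by
      have h2 : Real.sqrt ((1 - β₂) / (G ^ 2 * d)) * Real.sqrt (v j) * ‖u‖ ≤
          Real.sqrt ((1 - β₂) / (G ^ 2 * d)) * G * Real.sqrt (d / (1 - β₂)) := by
        have h3 : 0 ≤ Real.sqrt ((1 - β₂) / (G ^ 2 * d)) := Real.sqrt_nonneg _
        have := mul_le_mul (mul_le_mul_of_nonneg_left hsv h3) hnorm hupos.le
          (by positivity)
        exact this
      refine h2.trans_eq ?_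
      rw [show Real.sqrt ((1 - β₂) / (G ^ 2 * d)) * G = Real.sqrt ((1 - β₂) / d) by
        rw [show (1 - β₂) / (G ^ 2 * d) = (1 - β₂) / d * (1 / G ^ 2) by ring,
          Real.sqrt_mul (by positivity)]
        rw [show (1:ℝ) / G ^ 2 = (1 / G) ^ 2 by ring, Real.sqrt_sq (by positivity)]
        field_simp]
      rw [← Real.sqrt_mul (by positivity)]
      rw [show (1 - β₂) / d * (d / (1 - β₂)) = 1 by field_simp]
      exact Real.sqrt_one
    have haju : a j * u j = (a j * g j) / Real.sqrt (v j) := by rw [huj]; ring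
    have hden : 0 < Real.sqrt (v j) * ‖u‖ := by positivity
    rw [haju, div_div, le_div_iff₀ hden]
    nlinarith [mul_le_mul_of_nonneg_left hkey hag]
  · have hg0 : g j = 0 := by
      have := hvlow j
      have hv0 : v j ≤ 0 := le_of_not_gt hvj
      have hsq0 : g j ^ 2 ≤ 0 := by nlinarith
      have := le_antisymm hsq0 (sq_nonneg (g j))
      exact pow_eq_zero_iff two_ne_zero |>.mp this
    have huj : u j = 0 := by rw [hu j]; simp [hvj]
    rw [hg0, huj]
    simp
end

section
/- Fix an integer s ≥ 1 and a nonzero vector g ∈ ℝᵈ. For each coordinate i let r_i = |g_i|/‖g‖₂, choose l_i ∈ {0, 1, …, s−1} with l_i/s ≤ r_i ≤ (l_i+1)/s, and let ξ_i (independent across coordinates) take value l_i/s with probability 1 − (s·r_i − l_i) and value (l_i+1)/s with probability s·r_i − l_i. Define the randomized quantizer Q(g)_i = ‖g‖₂ · sign(g_i) · ξ_i. Then E[‖Q(g) − g‖₂²] ≤ min{ d/s², √d/s } · ‖g‖₂². -/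
open MeasureTheory ProbabilityTheory

/-- total variance of the randomized quantizer, QSGD Lemma 3.1 /
Remark A2 of the paper. With `s ≥ 1` quantization levels, `g ≠ 0`, `r_i = |g_i|/‖g‖₂`,
`l_i ∈ {0,…,s−1}` with `l_i/s ≤ r_i ≤ (l_i+1)/s`, and independent `ξ_i` taking value `l_i/s`
with probability `1 − (s·r_i − l_i)` and `(l_i+1)/s` with probability `s·r_i − l_i`, the
quantizer `Q(g)_i = ‖g‖₂·sign(g_i)·ξ_i` satisfies
`E[‖Q(g) − g‖₂²] ≤ min{d/s², √d/s}·‖g‖₂²`. -/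
theorem randomized_quantizer_total_variance {Ω : Type*} [MeasurableSpace Ω]
    (P : Measure Ω) [IsProbabilityMeasure P]
    (d s : ℕ) (hs : 1 ≤ s) (g : EuclideanSpace ℝ (Fin d)) (hg : g ≠ 0)
    (l : Fin d → ℕ) (hls : ∀ i, l i < s)
    (hl : ∀ i, (l i : ℝ) / s ≤ |g i| / ‖g‖ ∧ |g i| / ‖g‖ ≤ ((l i : ℝ) + 1) / s)
    (ξ : Fin d → Ω → ℝ) (hmeas : ∀ i, Measurable (ξ i))
    (hindep : iIndepFun ξ P)
    (hval : ∀ i ω, ξ i ω = (l i : ℝ) / s ∨ ξ i ω = ((l i : ℝ) + 1) / s)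
    (hp1 : ∀ i, P {ω | ξ i ω = ((l i : ℝ) + 1) / s}
      = ENNReal.ofReal (s * (|g i| / ‖g‖) - l i))
    (hp0 : ∀ i, P {ω | ξ i ω = (l i : ℝ) / s}
      = ENNReal.ofReal (1 - (s * (|g i| / ‖g‖) - l i))) :
    ∫ ω, ∑ i, (‖g‖ * Real.sign (g i) * ξ i ω - g i) ^ 2 ∂P
      ≤ min ((d : ℝ) / s ^ 2) (Real.sqrt d / s) * ‖g‖ ^ 2 := by
  classical
  have hG : (0:ℝ) < ‖g‖ := by simpa using norm_pos_iff.mpr hg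
  have hs0 : (0:ℝ) < (s:ℝ) := by exact_mod_cast Nat.lt_of_lt_of_le Nat.zero_lt_one hs
  set G : ℝ := ‖g‖ with hGdef
  set r : Fin d → ℝ := fun i => |g i| / G with hrdef
  set p : Fin d → ℝ := fun i => (s:ℝ) * r i - l i with hpdef
  have hr_nonneg : ∀ i, 0 ≤ r i := fun i => div_nonneg (abs_nonneg _) hG.le
  have hp_nonneg : ∀ i, 0 ≤ p i := by
    intro i
    have h := (hl i).1
    have : (l i : ℝ) ≤ (s:ℝ) * r i := by
      rw [div_le_iff₀ hs0] at h
      linarith [h]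
    simpa [hpdef] using sub_nonneg.mpr this
  have hp_le_one : ∀ i, p i ≤ 1 := by
    intro i
    have h := (hl i).2
    have : (s:ℝ) * r i ≤ (l i : ℝ) + 1 := by
      rw [le_div_iff₀ hs0] at h
      linarith [h]
    simp only [hpdef]
    linarith
  -- values
  set v0 : Fin d → ℝ := fun i => (l i : ℝ) / s with hv0
  set v1 : Fin d → ℝ := fun i => ((l i : ℝ) + 1) / s with hv1
  have hvne : ∀ i, v0 i ≠ v1 i := by
    intro i
    have : v0 i < v1 i := by
      rw [hv0, hv1, div_lt_div_iff₀ hs0 hs0]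
      nlinarith
    exact ne_of_lt this
  set A0 : Fin d → Set Ω := fun i => {ω | ξ i ω = v0 i} with hA0def
  set A1 : Fin d → Set Ω := fun i => {ω | ξ i ω = v1 i} with hA1def
  have hA0 : ∀ i, MeasurableSet (A0 i) := fun i =>
    hmeas i (measurableSet_singleton (v0 i))
  have hA1 : ∀ i, MeasurableSet (A1 i) := fun i =>
    hmeas i (measurableSet_singleton (v1 i))
  set c0 : Fin d → ℝ := fun i => G ^ 2 * (Real.sign (g i)) ^ 2 * (v0 i - r i) ^ 2 with hc0
  set c1 : Fin d → ℝ := fun i => G ^ 2 * (Real.sign (g i)) ^ 2 * (v1 i - r i) ^ 2 with hc1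
  -- pointwise identity
  have hpt : ∀ i ω, (G * Real.sign (g i) * ξ i ω - g i) ^ 2
      = (A0 i).indicator (fun _ => c0 i) ω + (A1 i).indicator (fun _ => c1 i) ω := by
    intro i ω
    have hsq : ∀ x : ℝ, (G * Real.sign (g i) * x - g i) ^ 2
        = G ^ 2 * (Real.sign (g i)) ^ 2 * (x - r i) ^ 2 := by
      intro x
      by_cases h : g i = 0
      · simp [h]
      · have habs : G * r i = |g i| := by
          rw [mul_comm]; exact div_mul_cancel₀ _ hG.ne'
        have hsgn : Real.sign (g i) * |g i| = g i := by
          rcases lt_trichotomy (g i) 0 with h' | h' | h'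
          · rw [Real.sign_of_neg h', abs_of_neg h']; ring
          · exact absurd h' h
          · rw [Real.sign_of_pos h', abs_of_pos h']
            ring
        obtain ⟨σ, hσ⟩ : ∃ σ, Real.sign (g i) = σ := ⟨_, rfl⟩
        rw [hσ]
        have key : g i = σ * (G * r i) := by rw [habs, ← hσ, hsgn]
        rw [key]; ring
    rcases hval i ω with h | h
    · have hm : ω ∈ A0 i := h
      have hm' : ω ∉ A1 i := by
        simp only [hA1def, Set.mem_setOf_eq, h]
        exact hvne i
      rw [Set.indicator_of_mem hm, Set.indicator_of_notMem hm', hsq, h]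
      simp [hc0, hv0]
    · have hm : ω ∈ A1 i := h
      have hm' : ω ∉ A0 i := by
        simp only [hA0def, Set.mem_setOf_eq, h]
        exact fun hh => hvne i hh.symm
      rw [Set.indicator_of_notMem hm', Set.indicator_of_mem hm, hsq, h]
      simp [hc1, hv1]
  -- measures
  have hPA1 : ∀ i, (P (A1 i)).toReal = p i := by
    intro i
    have h1 : P (A1 i) = ENNReal.ofReal (p i) := hp1 i
    rw [h1, ENNReal.toReal_ofReal (hp_nonneg i)]
  have hPA0 : ∀ i, (P (A0 i)).toReal = 1 - p i := by
    intro i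
    have h0 : P (A0 i) = ENNReal.ofReal (1 - p i) := hp0 i
    rw [h0, ENNReal.toReal_ofReal (by linarith [hp_le_one i])]
  -- integral computation
  have hint : ∀ i, Integrable
      (fun ω => (A0 i).indicator (fun _ => c0 i) ω + (A1 i).indicator (fun _ => c1 i) ω) P :=
    fun i => ((integrable_const (c0 i)).indicator (hA0 i)).add
      ((integrable_const (c1 i)).indicator (hA1 i))
  have hIeq : (∫ ω, ∑ i, (G * Real.sign (g i) * ξ i ω - g i) ^ 2 ∂P)
      = ∑ i, ((1 - p i) * c0 i + p i * c1 i) := by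
    have : (fun ω => ∑ i, (G * Real.sign (g i) * ξ i ω - g i) ^ 2)
        = fun ω => ∑ i, ((A0 i).indicator (fun _ => c0 i) ω
            + (A1 i).indicator (fun _ => c1 i) ω) := by
      funext ω; exact Finset.sum_congr rfl fun i _ => hpt i ω
    rw [this, integral_finset_sum _ (fun i _ => hint i)]
    refine Finset.sum_congr rfl fun i _ => ?_
    rw [integral_add ((integrable_const (c0 i)).indicator (hA0 i))
        ((integrable_const (c1 i)).indicator (hA1 i)),
      integral_indicator_const _ (hA0 i), integral_indicator_const _ (hA1 i),
      measureReal_def, measureReal_def, hPA0 i, hPA1 i]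
    rw [smul_eq_mul, smul_eq_mul]
  -- per-term value
  have hterm : ∀ i, (1 - p i) * c0 i + p i * c1 i
      = G ^ 2 * (Real.sign (g i)) ^ 2 * (p i * (1 - p i)) / s ^ 2 := by
    intro i
    have hri : r i = ((l i : ℝ) + p i) / s := by
      field_simp [hpdef]
      try ring
    simp only [hc0, hc1, hv0, hv1, hri]
    field_simp
    try ring
  have hsign : ∀ i, (Real.sign (g i)) ^ 2 ≤ 1 := by
    intro i
    rcases lt_trichotomy (g i) 0 with h | h | h
    · rw [Real.sign_of_neg h]; norm_num
    · rw [h, Real.sign_zero]; norm_num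
    · rw [Real.sign_of_pos h]; norm_num
  have hsign_nonneg : ∀ i, (0:ℝ) ≤ (Real.sign (g i)) ^ 2 := fun i => sq_nonneg _
  -- bound 1
  have hb1 : ∑ i, ((1 - p i) * c0 i + p i * c1 i) ≤ ((d:ℝ) / s ^ 2) * G ^ 2 := by
    have : ∀ i ∈ Finset.univ, (1 - p i) * c0 i + p i * c1 i ≤ G ^ 2 / s ^ 2 := by
      intro i _
      rw [hterm i]
      have h1 : (Real.sign (g i)) ^ 2 * (p i * (1 - p i)) ≤ 1 := by
        have hpp : p i * (1 - p i) ≤ 1 :=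
          mul_le_one₀ (hp_le_one i) (by linarith [hp_nonneg i, hp_le_one i]) (by linarith [hp_nonneg i, hp_le_one i])
        calc (Real.sign (g i)) ^ 2 * (p i * (1 - p i)) ≤ 1 * 1 := by
              apply mul_le_mul (hsign i) hpp
                (mul_nonneg (hp_nonneg i) (by linarith [hp_le_one i])) zero_le_one
          _ = 1 := by ring
      apply (div_le_div_iff_of_pos_right (by positivity)).mpr
      calc G ^ 2 * (Real.sign (g i)) ^ 2 * (p i * (1 - p i))
          = G ^ 2 * ((Real.sign (g i)) ^ 2 * (p i * (1 - p i))) := by ring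
        _ ≤ G ^ 2 * 1 := mul_le_mul_of_nonneg_left h1 (sq_nonneg G)
        _ = G ^ 2 := mul_one _
    calc ∑ i, ((1 - p i) * c0 i + p i * c1 i) ≤ ∑ _i : Fin d, G ^ 2 / s ^ 2 :=
          Finset.sum_le_sum this
      _ = (d:ℝ) * (G ^ 2 / s ^ 2) := by simp [Finset.sum_const, mul_comm]
      _ = ((d:ℝ) / s ^ 2) * G ^ 2 := by ring
  -- bound 2
  have hsumr : ∑ i, r i ≤ Real.sqrt d := by
    have hsq2 : ∑ i, r i ^ 2 = 1 := by
      have hnorm : G ^ 2 = ∑ i, (g i) ^ 2 := by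
        rw [hGdef, EuclideanSpace.norm_eq]
        rw [Real.sq_sqrt (Finset.sum_nonneg fun i _ => sq_nonneg _)]
        congr 1; funext i; rw [Real.norm_eq_abs, sq_abs]
      have : ∑ i, r i ^ 2 = (∑ i, (g i) ^ 2) / G ^ 2 := by
        rw [Finset.sum_div]
        refine Finset.sum_congr rfl fun i _ => ?_
        rw [hrdef, div_pow, sq_abs]
      rw [this, ← hnorm, div_self (by positivity)]
    have hcs : (∑ i, r i) ^ 2 ≤ (d:ℝ) * ∑ i, r i ^ 2 := by
      have := sq_sum_le_card_mul_sum_sq (s := (Finset.univ : Finset (Fin d))) (f := r)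
      simpa using this
    rw [hsq2, mul_one] at hcs
    have hnn : 0 ≤ ∑ i, r i := Finset.sum_nonneg fun i _ => hr_nonneg i
    exact (Real.le_sqrt hnn (Nat.cast_nonneg d)).mpr hcs
  have hb2 : ∑ i, ((1 - p i) * c0 i + p i * c1 i) ≤ (Real.sqrt d / s) * G ^ 2 := by
    have hstep : ∀ i ∈ Finset.univ, (1 - p i) * c0 i + p i * c1 i
        ≤ G ^ 2 * r i / s := by
      intro i _
      rw [hterm i]
      have h1 : (Real.sign (g i)) ^ 2 * (p i * (1 - p i)) ≤ p i := by
        have h2 : p i * (1 - p i) ≤ p i := by nlinarith [hp_nonneg i, hp_le_one i]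
        calc (Real.sign (g i)) ^ 2 * (p i * (1 - p i)) ≤ 1 * (p i * (1 - p i)) := by
              apply mul_le_mul_of_nonneg_right (hsign i)
                (mul_nonneg (hp_nonneg i) (by linarith [hp_le_one i]))
          _ = p i * (1 - p i) := by ring
          _ ≤ p i := h2
      have h3 : p i ≤ (s:ℝ) * r i := by
        simp only [hpdef]
        have : (0:ℝ) ≤ (l i : ℝ) := Nat.cast_nonneg _
        linarith
      rw [show G ^ 2 * r i / (s:ℝ) = G ^ 2 * ((s:ℝ) * r i) / (s:ℝ) ^ 2 by
        field_simp]
      apply (div_le_div_iff_of_pos_right (by positivity)).mpr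
      calc G ^ 2 * (Real.sign (g i)) ^ 2 * (p i * (1 - p i))
          = G ^ 2 * ((Real.sign (g i)) ^ 2 * (p i * (1 - p i))) := by ring
        _ ≤ G ^ 2 * ((s:ℝ) * r i) :=
            mul_le_mul_of_nonneg_left (h1.trans h3) (sq_nonneg G)
    calc ∑ i, ((1 - p i) * c0 i + p i * c1 i) ≤ ∑ i, G ^ 2 * r i / s :=
          Finset.sum_le_sum hstep
      _ = (G ^ 2 / s) * ∑ i, r i := by rw [Finset.mul_sum]; congr 1; funext i; ring
      _ ≤ (G ^ 2 / s) * Real.sqrt d :=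
          mul_le_mul_of_nonneg_left hsumr (by positivity)
      _ = (Real.sqrt d / s) * G ^ 2 := by ring
  rw [hIeq, min_mul_of_nonneg _ _ (sq_nonneg G)]
  exact le_min hb1 hb2
end
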